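/- Let Ω ⊂ X be int-nearly convex and let T : X → Y be a surjective continuous linear operator which is an open mapping. Then T(Ω) is int-nearly convex and int(T(Ω)) = T(int(Ω)). -/

import Mathlib

variable {X Y : Type*} [AddCommGroup X] [Module ℝ X] [TopologicalSpace X]
  [IsTopologicalAddGroup X] [ContinuousSMul ℝ X]
  [AddCommGroup Y] [Module ℝ Y] [TopologicalSpace Y]
  [IsTopologicalAddGroup Y] [ContinuousSMul ℝ Y]

def IntNearlyConvex {Z : Type*} [AddCommGroup Z] [Module ℝ Z] [TopologicalSpace Z]
    (Ω : Set Z) : Prop :=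
  ∃ C : Set Z, Convex ℝ C ∧ (interior C).Nonempty ∧ C ⊆ Ω ∧ Ω ⊆ closure C

/-- If `y` lies in an open set `U` then `y + ε • (y - y₀) ∈ U` for some `ε > 0`. -/
lemma push_past {Z : Type*} [AddCommGroup Z] [Module ℝ Z] [TopologicalSpace Z]
    [IsTopologicalAddGroup Z] [ContinuousSMul ℝ Z] {U : Set Z} (hU : IsOpen U)
    {y y₀ : Z} (hy : y ∈ U) : ∃ ε : ℝ, 0 < ε ∧ y + ε • (y - y₀) ∈ U := by
  have hc : Continuous fun t : ℝ => y + t • (y - y₀) := by continuity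
  have h0 : (fun t : ℝ => y + t • (y - y₀)) 0 ∈ U := by simpa using hy
  have := (hc.continuousAt (x := 0)).preimage_mem_nhds (hU.mem_nhds h0)
  rcases Metric.mem_nhds_iff.1 this with ⟨δ, hδ, hball⟩
  refine ⟨δ / 2, by positivity, ?_⟩
  have : (δ / 2 : ℝ) ∈ Metric.ball (0 : ℝ) δ := by
    simp only [Metric.mem_ball, dist_zero_right, Real.norm_eq_abs, abs_of_pos (by positivity : (0:ℝ) < δ/2)]
    linarith
  exact hball this

/-- Interior of the closure of a convex set with nonempty interior is its interior. -/
lemma interior_closure_subset {Z : Type*} [AddCommGroup Z] [Module ℝ Z] [TopologicalSpace Z]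
    [IsTopologicalAddGroup Z] [ContinuousSMul ℝ Z] {s : Set Z} (hs : Convex ℝ s)
    {x₀ : Z} (hx₀ : x₀ ∈ interior s) : interior (closure s) ⊆ interior s := by
  intro y hy
  obtain ⟨ε, hε, hy'⟩ := push_past (U := interior (closure s)) isOpen_interior
    (y₀ := x₀) hy
  have hy'' : y + ε • (y - x₀) ∈ closure s := interior_subset hy'
  have ha : (0:ℝ) < ε / (1 + ε) := by positivity
  have hb : (0:ℝ) ≤ 1 / (1 + ε) := by positivity
  have hab : ε / (1 + ε) + 1 / (1 + ε) = 1 := by field_simp; ring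
  have := hs.combo_interior_closure_mem_interior hx₀ hy'' ha hb hab
  convert this using 1
  match_scalars <;> field_simp <;> ring

theorem stmt3 (Ω : Set X) (hΩ : IntNearlyConvex Ω) (T : X →L[ℝ] Y)
    (hsurj : Function.Surjective T) (hopen : IsOpenMap T) :
    IntNearlyConvex (T '' Ω) ∧ interior (T '' Ω) = T '' interior Ω := by
  obtain ⟨C, hCconv, ⟨x₀, hx₀⟩, hCΩ, hΩC⟩ := hΩ
  set D : Set Y := T '' C with hD
  have hDconv : Convex ℝ D := hCconv.linear_image T.toLinearMap
  have hTint : T '' interior C ⊆ interior D :=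
    interior_maximal (Set.image_mono  interior_subset) (hopen _ isOpen_interior)
  have hy₀ : T x₀ ∈ interior D := hTint ⟨x₀, hx₀, rfl⟩
  have hDTΩ : D ⊆ T '' Ω := Set.image_mono  hCΩ
  have hTΩclD : T '' Ω ⊆ closure D := by
    refine (Set.image_mono  hΩC).trans ?_
    exact (image_closure_subset_closure_image T.continuous)
  refine ⟨⟨D, hDconv, ⟨T x₀, hy₀⟩, hDTΩ, hTΩclD⟩, ?_⟩
  -- interior Ω = interior C
  have hintΩ : interior Ω = interior C := by
    apply Set.Subset.antisymm
    · exact (interior_mono hΩC).trans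
        (fun y hy => interior_closure_subset hCconv hx₀ hy)
    · exact interior_mono hCΩ
  have hintTΩ : interior (T '' Ω) = interior D := by
    apply Set.Subset.antisymm
    · exact (interior_mono hTΩclD).trans
        (fun y hy => interior_closure_subset hDconv hy₀ hy)
    · exact interior_mono hDTΩ
  rw [hintTΩ, hintΩ]
  apply Set.Subset.antisymm
  · -- interior D ⊆ T '' interior C
    intro y hy
    obtain ⟨ε, hε, hy'⟩ := push_past (U := interior D) isOpen_interior (y₀ := T x₀) hy
    obtain ⟨x', hx', hTx'⟩ := interior_subset hy'
    refine ⟨(1 / (1 + ε)) • x' + (ε / (1 + ε)) • x₀, ?_, ?_⟩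
    · exact hCconv.combo_self_interior_mem_interior hx' hx₀
        (by positivity) (by positivity) (by field_simp)
    · rw [map_add, map_smul, map_smul, hTx']
      match_scalars <;> field_simp <;> ring
  · exact hTint
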